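/- For every affine signed permutation w in the group S̃^C_n, the cost of w equals half of its total displacement: $(w) = tvd(w)/2. -/

import Mathlib

/-- An affine signed permutation in `S̃^C_n`: a bijection `w : ℤ → ℤ` with
`w(−i) = −w(i)` and `w(i + (2n+2)) = w(i) + (2n+2)` for all `i ∈ ℤ`. -/
def IsAffCPerm (n : ℕ) (w : Equiv.Perm ℤ) : Prop :=
  (∀ i : ℤ, w (-i) = - w i) ∧
  (∀ i : ℤ, w (i + (2 * (n : ℤ) + 2)) = w i + (2 * (n : ℤ) + 2))

/-- Total displacement: `tvd(w) = ∑_{i=1}^n |w(i) − i|`. -/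
noncomputable def tvdAffC (n : ℕ) (w : Equiv.Perm ℤ) : ℕ :=
  ∑ i ∈ Finset.Icc (1 : ℤ) (n : ℤ), (w i - i).natAbs

/-- `t` is a transposition `⟨(x y)⟩` of `S̃^C_n` of cost `c`.  Writing `N = 2n+2`:
either (first kind) `x < y` with `x ≢ ±y (mod N)`, `t` exchanges `x + kN ↔ y + kN` and
`−x + kN ↔ −y + kN` for all `k ∈ ℤ` and fixes all other integers, and `c = y − x`;
or (second kind) `x < y` with `x + y ≡ 0 (mod N)`, `x ≢ y (mod N)`, and `x` not a
multiple of `n+1`, `t` exchanges `x + kN ↔ y + kN` for all `k ∈ ℤ` and fixes all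
other integers, and `c = (y − x)/2`. -/
def IsAffCTransp (n : ℕ) (t : Equiv.Perm ℤ) (c : ℕ) : Prop :=
  (∃ x y : ℤ, x < y ∧
    ¬ ((2 * (n : ℤ) + 2) ∣ (y - x)) ∧ ¬ ((2 * (n : ℤ) + 2) ∣ (y + x)) ∧
    (∀ k : ℤ, t (x + k * (2 * (n : ℤ) + 2)) = y + k * (2 * (n : ℤ) + 2)) ∧
    (∀ k : ℤ, t (y + k * (2 * (n : ℤ) + 2)) = x + k * (2 * (n : ℤ) + 2)) ∧
    (∀ k : ℤ, t (-x + k * (2 * (n : ℤ) + 2)) = -y + k * (2 * (n : ℤ) + 2)) ∧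
    (∀ k : ℤ, t (-y + k * (2 * (n : ℤ) + 2)) = -x + k * (2 * (n : ℤ) + 2)) ∧
    (∀ z : ℤ, (∀ k : ℤ, z ≠ x + k * (2 * (n : ℤ) + 2) ∧ z ≠ y + k * (2 * (n : ℤ) + 2) ∧
        z ≠ -x + k * (2 * (n : ℤ) + 2) ∧ z ≠ -y + k * (2 * (n : ℤ) + 2)) → t z = z) ∧
    (c : ℤ) = y - x) ∨
  (∃ x y : ℤ, x < y ∧
    ((2 * (n : ℤ) + 2) ∣ (x + y)) ∧ ¬ ((2 * (n : ℤ) + 2) ∣ (y - x)) ∧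
    ¬ (((n : ℤ) + 1) ∣ x) ∧
    (∀ k : ℤ, t (x + k * (2 * (n : ℤ) + 2)) = y + k * (2 * (n : ℤ) + 2)) ∧
    (∀ k : ℤ, t (y + k * (2 * (n : ℤ) + 2)) = x + k * (2 * (n : ℤ) + 2)) ∧
    (∀ z : ℤ, (∀ k : ℤ, z ≠ x + k * (2 * (n : ℤ) + 2) ∧ z ≠ y + k * (2 * (n : ℤ) + 2)) →
        t z = z) ∧
    2 * (c : ℤ) = y - x)

/-- The cost of `w ∈ S̃^C_n`: the minimum of `$(t₁) + ⋯ + $(t_k)` over all factorizations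
`w = t₁ ⋯ t_k` into transpositions of `S̃^C_n`. -/
noncomputable def costAffC (n : ℕ) (w : Equiv.Perm ℤ) : ℕ :=
  sInf {c : ℕ | ∃ L : List (Equiv.Perm ℤ × ℕ),
    (∀ p ∈ L, IsAffCTransp n p.1 p.2) ∧
    (L.map Prod.fst).prod = w ∧ c = (L.map Prod.snd).sum}

namespace AffC

variable {n : ℕ} {w v : Equiv.Perm ℤ}

lemma perm_shift (hw : IsAffCPerm n w) : ∀ (k z : ℤ), w (z + k*(2*(n:ℤ)+2)) = w z + k*(2*(n:ℤ)+2) := by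
  have key : ∀ z : ℤ, w (z - (2*(n:ℤ)+2)) = w z - (2*(n:ℤ)+2) := by
    intro z
    have := hw.2 (z - (2*(n:ℤ)+2))
    simp only [sub_add_cancel] at this
    omega
  intro k
  induction k using Int.induction_on with
  | zero => simp
  | succ k ih =>
      intro z
      have h1 := hw.2 (z + k*(2*(n:ℤ)+2))
      have h2 := ih z
      have e : z + (k+1)*(2*(n:ℤ)+2) = z + k*(2*(n:ℤ)+2) + (2*(n:ℤ)+2) := by ring
      rw [e, h1, h2]; ring
  | pred k ih =>
      intro z
      have h1 := key (z + (-k)*(2*(n:ℤ)+2))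
      have h2 := ih z
      have e : z + (-(k:ℤ)-1)*(2*(n:ℤ)+2) = z + (-(k:ℤ))*(2*(n:ℤ)+2) - (2*(n:ℤ)+2) := by ring
      rw [e, h1, h2]; ring

lemma perm_one : IsAffCPerm n 1 := by
  constructor <;> intro i <;> simp

lemma perm_mul (ht : IsAffCPerm n v) (hw : IsAffCPerm n w) : IsAffCPerm n (v * w) := by
  constructor <;> intro i <;> simp [Equiv.Perm.mul_apply, hw.1, hw.2, ht.1, ht.2]

lemma perm_inv (hw : IsAffCPerm n w) : IsAffCPerm n w⁻¹ := by
  constructor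
  · intro i
    apply w.injective
    simp only [Equiv.Perm.coe_inv, Equiv.apply_symm_apply]
    rw [hw.1, Equiv.apply_symm_apply]
  · intro i
    apply w.injective
    simp only [Equiv.Perm.coe_inv, Equiv.apply_symm_apply]
    rw [hw.2, Equiv.apply_symm_apply]



/-- The underlying function of the transposition swapping the classes of `a` and `b`. -/
def swapFun (N a b : ℤ) (z : ℤ) : ℤ :=
  if N ∣ z - a then z + (b - a)
  else if N ∣ z - b then z - (b - a)
  else if N ∣ z + a then z - (b - a)
  else if N ∣ z + b then z + (b - a)
  else z

variable {N a b : ℤ}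

lemma swapFun_a {z : ℤ} (h : N ∣ z - a) : swapFun N a b z = z + (b - a) := by
  simp [swapFun, h]

lemma swapFun_b (hba : ¬ N ∣ b - a) {z : ℤ} (h : N ∣ z - b) :
    swapFun N a b z = z - (b - a) := by
  have h1 : ¬ N ∣ z - a := fun h' => hba (by have := dvd_sub h' h; simpa using this)
  simp [swapFun, h1, h]

lemma swapFun_na (h2a : ¬ N ∣ 2*a) {z : ℤ} (h : N ∣ z + a) :
    swapFun N a b z = z - (b - a) := by
  have h1 : ¬ N ∣ z - a := fun h' => h2a (by have := dvd_sub h h'; simpa [two_mul] using this)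
  by_cases h2 : N ∣ z - b
  · simp [swapFun, h1, h2]
  · simp [swapFun, h1, h2, h]

lemma swapFun_nb (h2b : ¬ N ∣ 2*b) (hba : ¬ N ∣ b - a) {z : ℤ} (h : N ∣ z + b) :
    swapFun N a b z = z + (b - a) := by
  by_cases h1 : N ∣ z - a
  · simp [swapFun, h1]
  · have h2 : ¬ N ∣ z - b := fun h' => h2b (by have := dvd_sub h h'; simpa [two_mul] using this)
    have h3 : ¬ N ∣ z + a := fun h' => hba (by have := dvd_sub h h'; simpa using this)
    simp [swapFun, h1, h2, h3, h]

lemma swapFun_fix {z : ℤ} (h1 : ¬ N ∣ z - a) (h2 : ¬ N ∣ z - b) (h3 : ¬ N ∣ z + a)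
    (h4 : ¬ N ∣ z + b) : swapFun N a b z = z := by
  simp [swapFun, h1, h2, h3, h4]

lemma swapFun_invol (hba : ¬ N ∣ b - a) (h2a : ¬ N ∣ 2*a) (h2b : ¬ N ∣ 2*b) :
    Function.Involutive (swapFun N a b) := by
  intro z
  by_cases c1 : N ∣ z - a
  · rw [swapFun_a c1, swapFun_b hba (by rw [show z + (b-a) - b = z - a from by ring]; exact c1)]
    ring
  · by_cases c2 : N ∣ z - b
    · rw [swapFun_b hba c2, swapFun_a (by rw [show z - (b-a) - a = z - b from by ring]; exact c2)]
      ring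
    · by_cases c3 : N ∣ z + a
      · rw [swapFun_na h2a c3,
          swapFun_nb h2b hba (by rw [show z - (b-a) + b = z + a from by ring]; exact c3)]
        ring
      · by_cases c4 : N ∣ z + b
        · rw [swapFun_nb h2b hba c4,
            swapFun_na h2a (by rw [show z + (b-a) + a = z + b from by ring]; exact c4)]
          ring
        · rw [swapFun_fix c1 c2 c3 c4, swapFun_fix c1 c2 c3 c4]

/-- The swap as a permutation. -/
noncomputable def swapPerm (N a b : ℤ) (hba : ¬ N ∣ b - a) (h2a : ¬ N ∣ 2*a)
    (h2b : ¬ N ∣ 2*b) : Equiv.Perm ℤ :=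
  Function.Involutive.toPerm (swapFun N a b) (swapFun_invol hba h2a h2b)

lemma swapPerm_apply (hba : ¬ N ∣ b - a) (h2a : ¬ N ∣ 2*a) (h2b : ¬ N ∣ 2*b) (z : ℤ) :
    swapPerm N a b hba h2a h2b z = swapFun N a b z := rfl


variable {hba : ¬ N ∣ b - a} {h2a : ¬ N ∣ 2*a} {h2b : ¬ N ∣ 2*b}

lemma swapPerm_on_a (k : ℤ) : swapPerm N a b hba h2a h2b (a + k*N) = b + k*N := by
  rw [swapPerm_apply, swapFun_a ⟨k, by ring⟩]; ring

lemma swapPerm_on_b (k : ℤ) : swapPerm N a b hba h2a h2b (b + k*N) = a + k*N := by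
  rw [swapPerm_apply, swapFun_b hba ⟨k, by ring⟩]; ring

lemma swapPerm_on_na (k : ℤ) : swapPerm N a b hba h2a h2b (-a + k*N) = -b + k*N := by
  rw [swapPerm_apply, swapFun_na h2a ⟨k, by ring⟩]; ring

lemma swapPerm_on_nb (k : ℤ) : swapPerm N a b hba h2a h2b (-b + k*N) = -a + k*N := by
  rw [swapPerm_apply, swapFun_nb h2b hba ⟨k, by ring⟩]; ring

lemma swapPerm_on_fix {z : ℤ} (c1 : ¬ N ∣ z - a) (c2 : ¬ N ∣ z - b) (c3 : ¬ N ∣ z + a)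
    (c4 : ¬ N ∣ z + b) : swapPerm N a b hba h2a h2b z = z := by
  rw [swapPerm_apply, swapFun_fix c1 c2 c3 c4]

lemma dvd_exists {x z : ℤ} (h : N ∣ z - x) : ∃ k : ℤ, z = x + k * N := by
  obtain ⟨m, hm⟩ := h
  exact ⟨m, by rw [mul_comm]; linarith⟩

lemma swap_isTransp (hab : a < b) (hba' : ¬ (2*(n:ℤ)+2) ∣ b - a)
    (h2a' : ¬ (2*(n:ℤ)+2) ∣ 2*a) (h2b' : ¬ (2*(n:ℤ)+2) ∣ 2*b) :
    IsAffCTransp n (swapPerm (2*(n:ℤ)+2) a b hba' h2a' h2b')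
      (if (2*(n:ℤ)+2) ∣ a + b then ((b-a)/2).toNat else (b-a).toNat) := by
  by_cases hsum : (2*(n:ℤ)+2) ∣ a + b
  · right
    refine ⟨a, b, hab, hsum, hba', ?_, ?_, ?_, ?_, ?_⟩
    · intro m
      obtain ⟨j, hj⟩ := m
      exact h2a' ⟨j, by push_cast at hj ⊢; linarith⟩
    · exact fun k => swapPerm_on_a k
    · exact fun k => swapPerm_on_b k
    · intro z hz
      have c1 : ¬ (2*(n:ℤ)+2) ∣ z - a := by
        intro h; obtain ⟨k, hk⟩ := dvd_exists h; exact (hz k).1 hk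
      have c2 : ¬ (2*(n:ℤ)+2) ∣ z - b := by
        intro h; obtain ⟨k, hk⟩ := dvd_exists h; exact (hz k).2 hk
      have c3 : ¬ (2*(n:ℤ)+2) ∣ z + a := by
        intro h
        have : (2*(n:ℤ)+2) ∣ z - b := by
          have := dvd_sub h hsum
          rw [show z + a - (a + b) = z - b from by ring] at this
          exact this
        exact c2 this
      have c4 : ¬ (2*(n:ℤ)+2) ∣ z + b := by
        intro h
        have : (2*(n:ℤ)+2) ∣ z - a := by
          have := dvd_sub h hsum
          rw [show z + b - (a + b) = z - a from by ring] at this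
          exact this
        exact c1 this
      exact swapPerm_on_fix c1 c2 c3 c4
    · have h2 : (2:ℤ) ∣ b - a := by
        obtain ⟨m, hm⟩ := hsum
        exact ⟨(n+1)*m - a, by linarith⟩
      rw [if_pos hsum, Int.toNat_of_nonneg (Int.ediv_nonneg (by linarith) (by norm_num))]
      exact Int.mul_ediv_cancel' h2
  · left
    refine ⟨a, b, hab, hba', by rwa [show b + a = a + b from add_comm b a], ?_, ?_, ?_, ?_, ?_, ?_⟩
    · exact fun k => swapPerm_on_a k
    · exact fun k => swapPerm_on_b k
    · exact fun k => swapPerm_on_na k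
    · exact fun k => swapPerm_on_nb k
    · intro z hz
      have c1 : ¬ (2*(n:ℤ)+2) ∣ z - a := by
        intro h; obtain ⟨k, hk⟩ := dvd_exists h; exact ((hz k).1 : _) hk
      have c2 : ¬ (2*(n:ℤ)+2) ∣ z - b := by
        intro h; obtain ⟨k, hk⟩ := dvd_exists h; exact (hz k).2.1 hk
      have c3 : ¬ (2*(n:ℤ)+2) ∣ z + a := by
        intro h
        have h' : (2*(n:ℤ)+2) ∣ z - (-a) := by rw [show z - (-a) = z + a from by ring]; exact h
        obtain ⟨k, hk⟩ := dvd_exists h'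
        exact (hz k).2.2.1 hk
      have c4 : ¬ (2*(n:ℤ)+2) ∣ z + b := by
        intro h
        have h' : (2*(n:ℤ)+2) ∣ z - (-b) := by rw [show z - (-b) = z + b from by ring]; exact h
        obtain ⟨k, hk⟩ := dvd_exists h'
        exact (hz k).2.2.2 hk
      exact swapPerm_on_fix c1 c2 c3 c4
    · rw [if_neg hsum, Int.toNat_of_nonneg (by linarith)]

lemma dvd_of_eq_fam {z x k : ℤ} (h : z = x + k * N) : N ∣ z - x := ⟨k, by rw [h]; ring⟩

lemma not_fam_of_not_dvd {z x : ℤ} (h : ¬ N ∣ z - x) : ∀ k : ℤ, z ≠ x + k * N :=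
  fun k hk => h (dvd_of_eq_fam hk)

lemma dvd_flip {z u : ℤ} (h : N ∣ z + u) : N ∣ (-z) - u := by
  have := dvd_neg.mpr h
  rwa [show -(z + u) = -z - u from by ring] at this

lemma dvd_flip' {z u : ℤ} (h : N ∣ z - u) : N ∣ (-z) + u := by
  have := dvd_neg.mpr h
  rwa [show -(z - u) = -z + u from by ring] at this

lemma sub_neg_fam {z x : ℤ} : z - (-x) = z + x := by ring

lemma dvd_unshift {z u : ℤ} (h : N ∣ z + N - u) : N ∣ z - u := by
  have h' := dvd_sub h (dvd_refl N)
  rwa [show z + N - u - N = z - u from by ring] at h'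

section TranspPerm

variable {t : Equiv.Perm ℤ} {c : ℕ}

lemma transp_perm (ht : IsAffCTransp n t c) : IsAffCPerm n t := by
  rcases ht with ⟨x,y,hxy,hd,hs,h1,h2,h3,h4,hfix,hc⟩ | ⟨x,y,hxy,hsum,hd,hx1,h1,h2,hfix,hc⟩
  · constructor
    · intro i
      by_cases d1 : (2*(n:ℤ)+2) ∣ i - x
      · obtain ⟨k, hk⟩ := dvd_exists d1
        have e : -i = -x + (-k)*(2*(n:ℤ)+2) := by rw [hk]; ring
        have hti : t i = y + k*(2*(n:ℤ)+2) := by rw [hk]; exact h1 k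
        have hti2 : t (-i) = -y + (-k)*(2*(n:ℤ)+2) := by rw [e]; exact h3 (-k)
        rw [hti2, hti]; ring
      · by_cases d2 : (2*(n:ℤ)+2) ∣ i - y
        · obtain ⟨k, hk⟩ := dvd_exists d2
          have e : -i = -y + (-k)*(2*(n:ℤ)+2) := by rw [hk]; ring
          have hti : t i = x + k*(2*(n:ℤ)+2) := by rw [hk]; exact h2 k
          have hti2 : t (-i) = -x + (-k)*(2*(n:ℤ)+2) := by rw [e]; exact h4 (-k)
          rw [hti2, hti]; ring
        · by_cases d3 : (2*(n:ℤ)+2) ∣ i + x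
          · obtain ⟨k, hk⟩ := dvd_exists (show (2*(n:ℤ)+2) ∣ i - (-x) by rw [sub_neg_fam]; exact d3)
            have e : -i = x + (-k)*(2*(n:ℤ)+2) := by rw [hk]; ring
            have hti : t i = -y + k*(2*(n:ℤ)+2) := by rw [hk]; exact h3 k
            have hti2 : t (-i) = y + (-k)*(2*(n:ℤ)+2) := by rw [e]; exact h1 (-k)
            rw [hti2, hti]; ring
          · by_cases d4 : (2*(n:ℤ)+2) ∣ i + y
            · obtain ⟨k, hk⟩ := dvd_exists (show (2*(n:ℤ)+2) ∣ i - (-y) by rw [sub_neg_fam]; exact d4)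
              have e : -i = y + (-k)*(2*(n:ℤ)+2) := by rw [hk]; ring
              have hti : t i = -x + k*(2*(n:ℤ)+2) := by rw [hk]; exact h4 k
              have hti2 : t (-i) = x + (-k)*(2*(n:ℤ)+2) := by rw [e]; exact h2 (-k)
              rw [hti2, hti]; ring
            · have fix1 : t i = i := by
                refine hfix i (fun k => ⟨not_fam_of_not_dvd d1 k, not_fam_of_not_dvd d2 k, ?_, ?_⟩)
                · exact fun hk => d3 (by have := dvd_of_eq_fam hk; rwa [sub_neg_fam] at this)
                · exact fun hk => d4 (by have := dvd_of_eq_fam hk; rwa [sub_neg_fam] at this)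
              have fix2 : t (-i) = -i := by
                refine hfix (-i) (fun k => ⟨?_, ?_, ?_, ?_⟩)
                · exact fun hk => d3 (by
                    have := dvd_flip' (dvd_of_eq_fam hk)
                    rwa [show -(-i) + x = i + x from by ring] at this)
                · exact fun hk => d4 (by
                    have := dvd_flip' (dvd_of_eq_fam hk)
                    rwa [show -(-i) + y = i + y from by ring] at this)
                · exact fun hk => d1 (by
                    have := dvd_of_eq_fam hk; rw [sub_neg_fam] at this
                    have := dvd_flip this
                    rwa [show -(-i) - x = i - x from by ring] at this)
                · exact fun hk => d2 (by
                    have := dvd_of_eq_fam hk; rw [sub_neg_fam] at this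
                    have := dvd_flip this
                    rwa [show -(-i) - y = i - y from by ring] at this)
              rw [fix1, fix2]
    · intro i
      by_cases d1 : (2*(n:ℤ)+2) ∣ i - x
      · obtain ⟨k, hk⟩ := dvd_exists d1
        have e : i + (2*(n:ℤ)+2) = x + (k+1)*(2*(n:ℤ)+2) := by rw [hk]; ring
        have hti : t i = y + k*(2*(n:ℤ)+2) := by rw [hk]; exact h1 k
        have hti2 : t (i + (2*(n:ℤ)+2)) = y + (k+1)*(2*(n:ℤ)+2) := by rw [e]; exact h1 (k+1)
        rw [hti2, hti]; ring
      · by_cases d2 : (2*(n:ℤ)+2) ∣ i - y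
        · obtain ⟨k, hk⟩ := dvd_exists d2
          have e : i + (2*(n:ℤ)+2) = y + (k+1)*(2*(n:ℤ)+2) := by rw [hk]; ring
          have hti : t i = x + k*(2*(n:ℤ)+2) := by rw [hk]; exact h2 k
          have hti2 : t (i + (2*(n:ℤ)+2)) = x + (k+1)*(2*(n:ℤ)+2) := by rw [e]; exact h2 (k+1)
          rw [hti2, hti]; ring
        · by_cases d3 : (2*(n:ℤ)+2) ∣ i + x
          · obtain ⟨k, hk⟩ := dvd_exists (show (2*(n:ℤ)+2) ∣ i - (-x) by rw [sub_neg_fam]; exact d3)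
            have e : i + (2*(n:ℤ)+2) = -x + (k+1)*(2*(n:ℤ)+2) := by rw [hk]; ring
            have hti : t i = -y + k*(2*(n:ℤ)+2) := by rw [hk]; exact h3 k
            have hti2 : t (i + (2*(n:ℤ)+2)) = -y + (k+1)*(2*(n:ℤ)+2) := by rw [e]; exact h3 (k+1)
            rw [hti2, hti]; ring
          · by_cases d4 : (2*(n:ℤ)+2) ∣ i + y
            · obtain ⟨k, hk⟩ := dvd_exists (show (2*(n:ℤ)+2) ∣ i - (-y) by rw [sub_neg_fam]; exact d4)
              have e : i + (2*(n:ℤ)+2) = -y + (k+1)*(2*(n:ℤ)+2) := by rw [hk]; ring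
              have hti : t i = -x + k*(2*(n:ℤ)+2) := by rw [hk]; exact h4 k
              have hti2 : t (i + (2*(n:ℤ)+2)) = -x + (k+1)*(2*(n:ℤ)+2) := by rw [e]; exact h4 (k+1)
              rw [hti2, hti]; ring
            · have fix1 : t i = i := by
                refine hfix i (fun k => ⟨not_fam_of_not_dvd d1 k, not_fam_of_not_dvd d2 k, ?_, ?_⟩)
                · exact fun hk => d3 (by have := dvd_of_eq_fam hk; rwa [sub_neg_fam] at this)
                · exact fun hk => d4 (by have := dvd_of_eq_fam hk; rwa [sub_neg_fam] at this)
              have fix2 : t (i + (2*(n:ℤ)+2)) = i + (2*(n:ℤ)+2) := by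
                refine hfix _ (fun k => ⟨?_, ?_, ?_, ?_⟩)
                · exact fun hk => d1 (dvd_unshift (dvd_of_eq_fam hk))
                · exact fun hk => d2 (dvd_unshift (dvd_of_eq_fam hk))
                · exact fun hk => d3 (by
                    have := dvd_of_eq_fam hk; rw [sub_neg_fam] at this
                    have h' := dvd_unshift (by
                      rwa [show i + (2*(n:ℤ)+2) + x = i + x + (2*(n:ℤ)+2) - 0 from by ring,
                        show i + x + (2*(n:ℤ)+2) - 0 = (i + x) + (2*(n:ℤ)+2) - 0 from by ring] at this)
                    rwa [show i + x - 0 = i + x from by ring] at h')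
                · exact fun hk => d4 (by
                    have := dvd_of_eq_fam hk; rw [sub_neg_fam] at this
                    have h' := dvd_unshift (by
                      rwa [show i + (2*(n:ℤ)+2) + y = (i + y) + (2*(n:ℤ)+2) - 0 from by ring] at this)
                    rwa [show i + y - 0 = i + y from by ring] at h')
              rw [fix1, fix2]
  · -- kind 2
    obtain ⟨m, hm⟩ := hsum
    have hx : x = -y + m*(2*(n:ℤ)+2) := by linarith [mul_comm m (2*(n:ℤ)+2),
      show (2*(n:ℤ)+2) * m = m * (2*(n:ℤ)+2) from mul_comm _ _]
    constructor
    · intro i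
      by_cases d1 : (2*(n:ℤ)+2) ∣ i - x
      · obtain ⟨k, hk⟩ := dvd_exists d1
        have e : -i = y + (-m-k)*(2*(n:ℤ)+2) := by rw [hk, hx]; ring
        have hti : t i = y + k*(2*(n:ℤ)+2) := by rw [hk]; exact h1 k
        have hti2 : t (-i) = x + (-m-k)*(2*(n:ℤ)+2) := by rw [e]; exact h2 (-m-k)
        rw [hti2, hti, hx]; ring
      · by_cases d2 : (2*(n:ℤ)+2) ∣ i - y
        · obtain ⟨k, hk⟩ := dvd_exists d2
          have e : -i = x + (-m-k)*(2*(n:ℤ)+2) := by rw [hk, hx]; ring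
          have hti : t i = x + k*(2*(n:ℤ)+2) := by rw [hk]; exact h2 k
          have hti2 : t (-i) = y + (-m-k)*(2*(n:ℤ)+2) := by rw [e]; exact h1 (-m-k)
          rw [hti2, hti, hx]; ring
        · have fix1 : t i = i :=
            hfix i (fun k => ⟨not_fam_of_not_dvd d1 k, not_fam_of_not_dvd d2 k⟩)
          have fix2 : t (-i) = -i := by
            refine hfix (-i) (fun k => ⟨?_, ?_⟩)
            · exact fun hk => d2 (by
                have := dvd_flip' (dvd_of_eq_fam hk)
                rw [show -(-i) + x = i - y + (x + y) from by ring] at this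
                have h' := dvd_sub this ⟨m, hm⟩
                rwa [show i - y + (x+y) - (x+y) = i - y from by ring] at h')
            · exact fun hk => d1 (by
                have := dvd_flip' (dvd_of_eq_fam hk)
                rw [show -(-i) + y = i - x + (x + y) from by ring] at this
                have h' := dvd_sub this ⟨m, hm⟩
                rwa [show i - x + (x+y) - (x+y) = i - x from by ring] at h')
          rw [fix1, fix2]
    · intro i
      by_cases d1 : (2*(n:ℤ)+2) ∣ i - x
      · obtain ⟨k, hk⟩ := dvd_exists d1
        have e : i + (2*(n:ℤ)+2) = x + (k+1)*(2*(n:ℤ)+2) := by rw [hk]; ring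
        have hti : t i = y + k*(2*(n:ℤ)+2) := by rw [hk]; exact h1 k
        have hti2 : t (i + (2*(n:ℤ)+2)) = y + (k+1)*(2*(n:ℤ)+2) := by rw [e]; exact h1 (k+1)
        rw [hti2, hti]; ring
      · by_cases d2 : (2*(n:ℤ)+2) ∣ i - y
        · obtain ⟨k, hk⟩ := dvd_exists d2
          have e : i + (2*(n:ℤ)+2) = y + (k+1)*(2*(n:ℤ)+2) := by rw [hk]; ring
          have hti : t i = x + k*(2*(n:ℤ)+2) := by rw [hk]; exact h2 k
          have hti2 : t (i + (2*(n:ℤ)+2)) = x + (k+1)*(2*(n:ℤ)+2) := by rw [e]; exact h2 (k+1)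
          rw [hti2, hti]; ring
        · have fix1 : t i = i :=
            hfix i (fun k => ⟨not_fam_of_not_dvd d1 k, not_fam_of_not_dvd d2 k⟩)
          have fix2 : t (i + (2*(n:ℤ)+2)) = i + (2*(n:ℤ)+2) := by
            refine hfix _ (fun k => ⟨?_, ?_⟩)
            · exact fun hk => d1 (dvd_unshift (dvd_of_eq_fam hk))
            · exact fun hk => d2 (dvd_unshift (dvd_of_eq_fam hk))
          rw [fix1, fix2]

lemma transp_inv (ht : IsAffCTransp n t c) : IsAffCTransp n t⁻¹ c := by
  have key : ∀ (u v : ℤ), t u = v → t⁻¹ v = u := fun u v h => by rw [← h, Equiv.Perm.coe_inv, Equiv.symm_apply_apply]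
  rcases ht with ⟨x,y,hxy,hd,hs,h1,h2,h3,h4,hfix,hc⟩ | ⟨x,y,hxy,hsum,hd,hx1,h1,h2,hfix,hc⟩
  · exact Or.inl ⟨x, y, hxy, hd, hs, fun k => key _ _ (h2 k), fun k => key _ _ (h1 k),
      fun k => key _ _ (h4 k), fun k => key _ _ (h3 k),
      fun z hz => key _ _ (hfix z hz), hc⟩
  · exact Or.inr ⟨x, y, hxy, hsum, hd, hx1, fun k => key _ _ (h2 k), fun k => key _ _ (h1 k),
      fun z hz => key _ _ (hfix z hz), hc⟩

end TranspPerm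

lemma tvd_cast (u : Equiv.Perm ℤ) :
    (tvdAffC n u : ℤ) = ∑ i ∈ Finset.Icc (1:ℤ) (n:ℤ), |u i - i| := by
  rw [tvdAffC, Nat.cast_sum]
  exact Finset.sum_congr rfl (fun i _ => Int.natCast_natAbs _)

lemma eq_of_dvd_small {i j : ℤ} (hi : i ∈ Finset.Icc (1:ℤ) (n:ℤ))
    (hj : j ∈ Finset.Icc (1:ℤ) (n:ℤ)) (h : (2*(n:ℤ)+2) ∣ i - j) : i = j := by
  rw [Finset.mem_Icc] at hi hj
  obtain ⟨m, hm⟩ := h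
  rcases lt_trichotomy m 0 with hm0 | hm0 | hm0
  · have : (2*(n:ℤ)+2) * m ≤ (2*(n:ℤ)+2) * (-1) :=
      mul_le_mul_of_nonneg_left (by omega) (by positivity)
    rw [mul_neg_one] at this
    omega
  · subst hm0
    rw [mul_zero] at hm
    omega
  · have : (2*(n:ℤ)+2) * 1 ≤ (2*(n:ℤ)+2) * m :=
      mul_le_mul_of_nonneg_left (by omega) (by positivity)
    rw [mul_one] at this
    omega

lemma not_dvd_window_sum {i j : ℤ} (hi : i ∈ Finset.Icc (1:ℤ) (n:ℤ))
    (hj : j ∈ Finset.Icc (1:ℤ) (n:ℤ)) : ¬ (2*(n:ℤ)+2) ∣ i + j := by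
  rw [Finset.mem_Icc] at hi hj
  rintro ⟨m, hm⟩
  rcases lt_trichotomy m 0 with hm0 | hm0 | hm0
  · have : (2*(n:ℤ)+2) * m ≤ (2*(n:ℤ)+2) * (-1) :=
      mul_le_mul_of_nonneg_left (by omega) (by positivity)
    rw [mul_neg_one] at this
    omega
  · subst hm0
    rw [mul_zero] at hm
    omega
  · have : (2*(n:ℤ)+2) * 1 ≤ (2*(n:ℤ)+2) * m :=
      mul_le_mul_of_nonneg_left (by omega) (by positivity)
    rw [mul_one] at this
    omega

lemma samefam (hv : IsAffCPerm n w) {x i j : ℤ} (hi : i ∈ Finset.Icc (1:ℤ) (n:ℤ))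
    (hj : j ∈ Finset.Icc (1:ℤ) (n:ℤ))
    (h1 : (2*(n:ℤ)+2) ∣ w i - x ∨ (2*(n:ℤ)+2) ∣ w i + x)
    (h2 : (2*(n:ℤ)+2) ∣ w j - x ∨ (2*(n:ℤ)+2) ∣ w j + x) : i = j := by
  have inj := w.injective
  rcases h1 with h1 | h1 <;> rcases h2 with h2 | h2
  · have hd : (2*(n:ℤ)+2) ∣ w i - w j := by
      have := dvd_sub h1 h2
      rwa [show w i - x - (w j - x) = w i - w j from by ring] at this
    obtain ⟨k, hk⟩ := dvd_exists hd
    have : w i = w (j + k * (2*(n:ℤ)+2)) := by rw [perm_shift hv k j]; linarith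
    have hij : i = j + k * (2*(n:ℤ)+2) := inj this
    exact eq_of_dvd_small hi hj (dvd_of_eq_fam hij)
  · exfalso
    have hd : (2*(n:ℤ)+2) ∣ w i + w j := by
      have := dvd_sub h1 (dvd_neg.mpr h2)
      rwa [show w i - x - -(w j + x) = w i + w j from by ring] at this
    obtain ⟨k, hk⟩ := dvd_exists (show (2*(n:ℤ)+2) ∣ w j - (- w i) by
      rwa [show w j - (- w i) = w i + w j from by ring])
    have : w j = w (-i + k * (2*(n:ℤ)+2)) := by rw [perm_shift hv k (-i), hv.1]; linarith
    have hij : j = -i + k * (2*(n:ℤ)+2) := inj this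
    exact not_dvd_window_sum hi hj (by
      have := dvd_of_eq_fam hij
      rwa [show j - (-i) = i + j from by ring] at this)
  · exfalso
    have hd : (2*(n:ℤ)+2) ∣ w i + w j := by
      have := dvd_sub h2 (dvd_neg.mpr h1)
      rwa [show w j - x - -(w i + x) = w i + w j from by ring] at this
    obtain ⟨k, hk⟩ := dvd_exists (show (2*(n:ℤ)+2) ∣ w j - (- w i) by
      rwa [show w j - (- w i) = w i + w j from by ring])
    have : w j = w (-i + k * (2*(n:ℤ)+2)) := by rw [perm_shift hv k (-i), hv.1]; linarith
    have hij : j = -i + k * (2*(n:ℤ)+2) := inj this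
    exact not_dvd_window_sum hi hj (by
      have := dvd_of_eq_fam hij
      rwa [show j - (-i) = i + j from by ring] at this)
  · have hd : (2*(n:ℤ)+2) ∣ w i - w j := by
      have := dvd_sub h1 h2
      rwa [show w i + x - (w j + x) = w i - w j from by ring] at this
    obtain ⟨k, hk⟩ := dvd_exists hd
    have : w i = w (j + k * (2*(n:ℤ)+2)) := by rw [perm_shift hv k j]; linarith
    have hij : i = j + k * (2*(n:ℤ)+2) := inj this
    exact eq_of_dvd_small hi hj (dvd_of_eq_fam hij)

lemma sum_le_two_smul (s : Finset ℤ) (g : ℤ → ℤ) (C : ℤ) (hC : 0 ≤ C)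
    (hb : ∀ i ∈ s, g i ≤ C) (hnn : ∀ i ∈ s, 0 ≤ g i)
    (hsupp : ∀ i ∈ s, ∀ j ∈ s, ∀ k ∈ s, g i ≠ 0 → g j ≠ 0 → g k ≠ 0 →
      i = j ∨ i = k ∨ j = k) :
    ∑ i ∈ s, g i ≤ 2 * C := by
  classical
  set s' := s.filter (fun i => g i ≠ 0) with hs'
  have hcard : s'.card ≤ 2 := by
    by_contra hlt
    push_neg at hlt
    obtain ⟨a, b, c, ha, hb', hc, hab, hac, hbc⟩ := Finset.two_lt_card_iff.mp hlt
    have haf := Finset.mem_filter.mp ha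
    have hbf := Finset.mem_filter.mp hb'
    have hcf := Finset.mem_filter.mp hc
    rcases hsupp a haf.1 b hbf.1 c hcf.1 haf.2 hbf.2 hcf.2 with h | h | h
    · exact hab h
    · exact hac h
    · exact hbc h
  have heq : ∑ i ∈ s, g i = ∑ i ∈ s', g i := by
    rw [hs', Finset.sum_filter_ne_zero]
  rw [heq]
  calc ∑ i ∈ s', g i ≤ s'.card • C :=
        Finset.sum_le_card_nsmul s' g C (fun i hi => hb i (Finset.mem_filter.mp hi).1)
    _ = (s'.card : ℤ) * C := by rw [nsmul_eq_mul]
    _ ≤ 2 * C := by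
        apply mul_le_mul_of_nonneg_right _ hC
        exact_mod_cast hcard

lemma sum_le_one_smul (s : Finset ℤ) (g : ℤ → ℤ) (C : ℤ) (hC : 0 ≤ C)
    (hb : ∀ i ∈ s, g i ≤ C) (hnn : ∀ i ∈ s, 0 ≤ g i)
    (hsupp : ∀ i ∈ s, ∀ j ∈ s, g i ≠ 0 → g j ≠ 0 → i = j) :
    ∑ i ∈ s, g i ≤ C := by
  classical
  set s' := s.filter (fun i => g i ≠ 0) with hs'
  have hcard : s'.card ≤ 1 := by
    by_contra hlt
    push_neg at hlt
    obtain ⟨a, b, ha, hb', hab⟩ := Finset.one_lt_card_iff.mp hlt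
    have haf := Finset.mem_filter.mp ha
    have hbf := Finset.mem_filter.mp hb'
    exact hab (hsupp a haf.1 b hbf.1 haf.2 hbf.2)
  have heq : ∑ i ∈ s, g i = ∑ i ∈ s', g i := by
    rw [hs', Finset.sum_filter_ne_zero]
  rw [heq]
  calc ∑ i ∈ s', g i ≤ s'.card • C :=
        Finset.sum_le_card_nsmul s' g C (fun i hi => hb i (Finset.mem_filter.mp hi).1)
    _ = (s'.card : ℤ) * C := by rw [nsmul_eq_mul]
    _ ≤ 1 * C := by
        apply mul_le_mul_of_nonneg_right _ hC
        exact_mod_cast hcard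
    _ = C := one_mul C

lemma tvd_step {t : Equiv.Perm ℤ} {c : ℕ} (hv : IsAffCPerm n w) (ht : IsAffCTransp n t c) :
    (tvdAffC n (t * w) : ℤ) ≤ (tvdAffC n w : ℤ) + 2 * (c : ℤ) := by
  rw [tvd_cast, tvd_cast]
  have tri : ∀ i : ℤ, |(t * w) i - i| ≤ |w i - i| + |t (w i) - w i| := by
    intro i
    rw [Equiv.Perm.mul_apply]
    have := abs_sub_le (t (w i)) (w i) i
    linarith
  have main : ∑ i ∈ Finset.Icc (1:ℤ) (n:ℤ), |t (w i) - w i| ≤ 2 * (c:ℤ) := by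
    rcases ht with ⟨x,y,hxy,hd,hs,h1,h2,h3,h4,hfix,hc⟩ | ⟨x,y,hxy,hsum,hd,hx1,h1,h2,hfix,hc⟩
    · -- kind 1
      have bound : ∀ z : ℤ, |t z - z| ≤ y - x := by
        intro z
        by_cases d1 : (2*(n:ℤ)+2) ∣ z - x
        · obtain ⟨k, hk⟩ := dvd_exists d1
          have : t z = y + k * (2*(n:ℤ)+2) := by rw [hk]; exact h1 k
          rw [this, hk, show y + k*(2*(n:ℤ)+2) - (x + k*(2*(n:ℤ)+2)) = y - x from by ring,
            abs_of_nonneg (by linarith)]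
        · by_cases d2 : (2*(n:ℤ)+2) ∣ z - y
          · obtain ⟨k, hk⟩ := dvd_exists d2
            have : t z = x + k * (2*(n:ℤ)+2) := by rw [hk]; exact h2 k
            rw [this, hk, show x + k*(2*(n:ℤ)+2) - (y + k*(2*(n:ℤ)+2)) = -(y - x) from by ring,
              abs_neg, abs_of_nonneg (by linarith)]
          · by_cases d3 : (2*(n:ℤ)+2) ∣ z + x
            · obtain ⟨k, hk⟩ := dvd_exists (show (2*(n:ℤ)+2) ∣ z - (-x) by
                rw [sub_neg_fam]; exact d3)
              have : t z = -y + k * (2*(n:ℤ)+2) := by rw [hk]; exact h3 k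
              rw [this, hk, show -y + k*(2*(n:ℤ)+2) - (-x + k*(2*(n:ℤ)+2)) = -(y - x) from by ring,
                abs_neg, abs_of_nonneg (by linarith)]
            · by_cases d4 : (2*(n:ℤ)+2) ∣ z + y
              · obtain ⟨k, hk⟩ := dvd_exists (show (2*(n:ℤ)+2) ∣ z - (-y) by
                  rw [sub_neg_fam]; exact d4)
                have : t z = -x + k * (2*(n:ℤ)+2) := by rw [hk]; exact h4 k
                rw [this, hk, show -x + k*(2*(n:ℤ)+2) - (-y + k*(2*(n:ℤ)+2)) = y - x from by ring,
                  abs_of_nonneg (by linarith)]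
              · have : t z = z := by
                  refine hfix z (fun k => ⟨not_fam_of_not_dvd d1 k, not_fam_of_not_dvd d2 k, ?_, ?_⟩)
                  · exact fun hk => d3 (by have := dvd_of_eq_fam hk; rwa [sub_neg_fam] at this)
                  · exact fun hk => d4 (by have := dvd_of_eq_fam hk; rwa [sub_neg_fam] at this)
                rw [this]
                simp
                linarith
      have supp : ∀ z : ℤ, t z ≠ z →
          ((2*(n:ℤ)+2) ∣ z - x ∨ (2*(n:ℤ)+2) ∣ z + x) ∨
          ((2*(n:ℤ)+2) ∣ z - y ∨ (2*(n:ℤ)+2) ∣ z + y) := by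
        intro z hz
        by_contra hcon
        push_neg at hcon
        refine hz (hfix z (fun k => ⟨not_fam_of_not_dvd hcon.1.1 k,
          not_fam_of_not_dvd hcon.2.1 k, ?_, ?_⟩))
        · exact fun hk => hcon.1.2 (by have := dvd_of_eq_fam hk; rwa [sub_neg_fam] at this)
        · exact fun hk => hcon.2.2 (by have := dvd_of_eq_fam hk; rwa [sub_neg_fam] at this)
      have := sum_le_two_smul (Finset.Icc (1:ℤ) (n:ℤ)) (fun i => |t (w i) - w i|) (y - x)
        (by linarith) (fun i _ => bound (w i)) (fun i _ => abs_nonneg _) ?_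
      · calc ∑ i ∈ Finset.Icc (1:ℤ) (n:ℤ), |t (w i) - w i| ≤ 2 * (y - x) := this
          _ = 2 * (c:ℤ) := by rw [hc]
      · intro i hi j hj k hk gi gj gk
        have hti : t (w i) ≠ w i := fun h => gi (by simp [h])
        have htj : t (w j) ≠ w j := fun h => gj (by simp [h])
        have htk : t (w k) ≠ w k := fun h => gk (by simp [h])
        rcases supp _ hti with fi | fi <;> rcases supp _ htj with fj | fj <;>
          rcases supp _ htk with fk | fk
        · exact Or.inl (samefam hv hi hj fi fj)
        · exact Or.inl (samefam hv hi hj fi fj)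
        · exact Or.inr (Or.inl (samefam hv hi hk fi fk))
        · exact Or.inr (Or.inr (samefam hv hj hk fj fk))
        · exact Or.inr (Or.inr (samefam hv hj hk fj fk))
        · exact Or.inr (Or.inl (samefam hv hi hk fi fk))
        · exact Or.inl (samefam hv hi hj fi fj)
        · exact Or.inl (samefam hv hi hj fi fj)
    · -- kind 2
      obtain ⟨m, hm⟩ := hsum
      have bound : ∀ z : ℤ, |t z - z| ≤ y - x := by
        intro z
        by_cases d1 : (2*(n:ℤ)+2) ∣ z - x
        · obtain ⟨k, hk⟩ := dvd_exists d1
          have : t z = y + k * (2*(n:ℤ)+2) := by rw [hk]; exact h1 k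
          rw [this, hk, show y + k*(2*(n:ℤ)+2) - (x + k*(2*(n:ℤ)+2)) = y - x from by ring,
            abs_of_nonneg (by linarith)]
        · by_cases d2 : (2*(n:ℤ)+2) ∣ z - y
          · obtain ⟨k, hk⟩ := dvd_exists d2
            have : t z = x + k * (2*(n:ℤ)+2) := by rw [hk]; exact h2 k
            rw [this, hk, show x + k*(2*(n:ℤ)+2) - (y + k*(2*(n:ℤ)+2)) = -(y - x) from by ring,
              abs_neg, abs_of_nonneg (by linarith)]
          · have : t z = z :=
              hfix z (fun k => ⟨not_fam_of_not_dvd d1 k, not_fam_of_not_dvd d2 k⟩)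
            rw [this]
            simp
            linarith
      have supp : ∀ z : ℤ, t z ≠ z → ((2*(n:ℤ)+2) ∣ z - x ∨ (2*(n:ℤ)+2) ∣ z + x) := by
        intro z hz
        by_cases d1 : (2*(n:ℤ)+2) ∣ z - x
        · exact Or.inl d1
        · by_cases d2 : (2*(n:ℤ)+2) ∣ z - y
          · refine Or.inr ?_
            have : z + x = (z - y) + (x + y) := by ring
            rw [this]
            exact dvd_add d2 ⟨m, hm⟩
          · exact absurd (hfix z (fun k => ⟨not_fam_of_not_dvd d1 k,
              not_fam_of_not_dvd d2 k⟩)) hz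
      have := sum_le_one_smul (Finset.Icc (1:ℤ) (n:ℤ)) (fun i => |t (w i) - w i|) (y - x)
        (by linarith) (fun i _ => bound (w i)) (fun i _ => abs_nonneg _) ?_
      · calc ∑ i ∈ Finset.Icc (1:ℤ) (n:ℤ), |t (w i) - w i| ≤ y - x := this
          _ = 2 * (c:ℤ) := by rw [hc]
      · intro i hi j hj gi gj
        have hti : t (w i) ≠ w i := fun h => gi (by simp [h])
        have htj : t (w j) ≠ w j := fun h => gj (by simp [h])
        exact samefam hv hi hj (supp _ hti) (supp _ htj)
  calc ∑ i ∈ Finset.Icc (1:ℤ) (n:ℤ), |(t*w) i - i|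
      ≤ ∑ i ∈ Finset.Icc (1:ℤ) (n:ℤ), (|w i - i| + |t (w i) - w i|) :=
        Finset.sum_le_sum (fun i _ => tri i)
    _ = ∑ i ∈ Finset.Icc (1:ℤ) (n:ℤ), |w i - i|
        + ∑ i ∈ Finset.Icc (1:ℤ) (n:ℤ), |t (w i) - w i| := Finset.sum_add_distrib
    _ ≤ _ := by linarith [main]

lemma tvd_list (L : List (Equiv.Perm ℤ × ℕ)) (hL : ∀ p ∈ L, IsAffCTransp n p.1 p.2) :
    IsAffCPerm n (L.map Prod.fst).prod ∧
    (tvdAffC n (L.map Prod.fst).prod : ℤ) ≤ 2 * ((L.map Prod.snd).sum : ℤ) := by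
  induction L with
  | nil =>
      constructor
      · simpa using (perm_one (n := n))
      · simp [tvdAffC]
  | cons p L ih =>
      obtain ⟨ih1, ih2⟩ := ih (fun q hq => hL q (List.mem_cons_of_mem p hq))
      have hp := hL p (List.mem_cons_self (a := p) (l := L))
      constructor
      · simp only [List.map_cons, List.prod_cons]
        exact perm_mul (transp_perm hp) ih1
      · simp only [List.map_cons, List.prod_cons, List.sum_cons]
        have step := tvd_step ih1 hp
        push_cast
        push_cast at ih2
        linarith

lemma decomp (z : ℤ) : ∃ r k : ℤ, 0 ≤ r ∧ r < 2*(n:ℤ)+2 ∧ z = r + k * (2*(n:ℤ)+2) := by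
  refine ⟨z % (2*(n:ℤ)+2), z / (2*(n:ℤ)+2), Int.emod_nonneg z (by positivity),
    Int.emod_lt_of_pos z (by positivity), ?_⟩
  have h := Int.emod_add_mul_ediv z (2*(n:ℤ)+2)
  linarith [mul_comm (z / (2*(n:ℤ)+2)) (2*(n:ℤ)+2)]

lemma eq_one_of_tvd_zero (hw : IsAffCPerm n w) (h : tvdAffC n w = 0) : w = 1 := by
  have hwin : ∀ i : ℤ, 1 ≤ i → i ≤ (n:ℤ) → w i = i := by
    intro i h1 h2
    have := Finset.sum_eq_zero_iff.mp h i (Finset.mem_Icc.mpr ⟨h1, h2⟩)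
    omega
  have h0 : w 0 = 0 := by
    have := hw.1 0
    rw [neg_zero] at this
    linarith
  have hn1 : w ((n:ℤ)+1) = (n:ℤ)+1 := by
    have h2 := hw.2 (-((n:ℤ)+1))
    rw [show -((n:ℤ)+1) + (2*(n:ℤ)+2) = (n:ℤ)+1 from by ring] at h2
    have h3 := hw.1 ((n:ℤ)+1)
    linarith
  have hall : ∀ z : ℤ, w z = z := by
    intro z
    obtain ⟨r, k, hr0, hrN, hz⟩ := decomp (n := n) z
    by_cases hc : r ≤ (n:ℤ) + 1
    · have hbase : w r = r := by
        rcases eq_or_lt_of_le hr0 with h' | h'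
        · rw [← h']; exact h0
        · rcases eq_or_lt_of_le hc with h'' | h''
          · rw [h'']; exact hn1
          · exact hwin r (by omega) (by omega)
      rw [hz, perm_shift hw k r, hbase]
    · have h1 : 1 ≤ 2*(n:ℤ)+2 - r := by omega
      have h2 : 2*(n:ℤ)+2 - r ≤ (n:ℤ) := by omega
      have hbase : w (2*(n:ℤ)+2 - r) = 2*(n:ℤ)+2 - r := hwin _ h1 h2
      have hneg : w (-(2*(n:ℤ)+2 - r)) = -(2*(n:ℤ)+2 - r) := by rw [hw.1, hbase]
      have hz2 : z = -(2*(n:ℤ)+2 - r) + (k+1) * (2*(n:ℤ)+2) := by linarith [hz]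
      rw [hz2, perm_shift hw (k+1) _, hneg]
  ext z
  simp [hall z]

lemma window_rep {z : ℤ} (h2z : ¬ (2*(n:ℤ)+2) ∣ 2*z) :
    ∃ i, i ∈ Finset.Icc (1:ℤ) (n:ℤ) ∧
      ∃ k : ℤ, i = z + k * (2*(n:ℤ)+2) ∨ i = -z + k * (2*(n:ℤ)+2) := by
  obtain ⟨r, k, hr0, hrN, hz⟩ := decomp (n := n) z
  have hrne0 : r ≠ 0 := by
    intro h
    refine h2z ⟨2*k, ?_⟩
    rw [hz, h]; ring
  have hrnen1 : r ≠ (n:ℤ)+1 := by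
    intro h
    refine h2z ⟨2*k+1, ?_⟩
    rw [hz, h]; ring
  by_cases hc : r ≤ (n:ℤ)
  · exact ⟨r, Finset.mem_Icc.mpr ⟨by omega, hc⟩, -k, Or.inl (by rw [hz]; ring)⟩
  · refine ⟨2*(n:ℤ)+2 - r, Finset.mem_Icc.mpr ⟨by omega, by omega⟩, k+1, Or.inr (by rw [hz]; ring)⟩

lemma pos_window_eq {z i j : ℤ} (hi : i ∈ Finset.Icc (1:ℤ) (n:ℤ))
    (hj : j ∈ Finset.Icc (1:ℤ) (n:ℤ))
    (h1 : ∃ k : ℤ, i = z + k * (2*(n:ℤ)+2) ∨ i = -z + k * (2*(n:ℤ)+2))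
    (h2 : ∃ k : ℤ, j = z + k * (2*(n:ℤ)+2) ∨ j = -z + k * (2*(n:ℤ)+2)) : i = j := by
  obtain ⟨k1, hk1⟩ := h1
  obtain ⟨k2, hk2⟩ := h2
  rcases hk1 with hk1 | hk1 <;> rcases hk2 with hk2 | hk2
  · exact eq_of_dvd_small hi hj ⟨k1 - k2, by rw [hk1, hk2]; ring⟩
  · exact absurd (⟨k1 + k2, by rw [hk1, hk2]; ring⟩ : (2*(n:ℤ)+2) ∣ i + j)
      (not_dvd_window_sum hi hj)
  · exact absurd (⟨k1 + k2, by rw [hk1, hk2]; ring⟩ : (2*(n:ℤ)+2) ∣ i + j)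
      (not_dvd_window_sum hi hj)
  · exact eq_of_dvd_small hi hj ⟨k1 - k2, by rw [hk1, hk2]; ring⟩

set_option maxHeartbeats 2000000 in
lemma exists_step (hw : IsAffCPerm n w) (hne : tvdAffC n w ≠ 0) :
    ∃ (t : Equiv.Perm ℤ) (c : ℕ), IsAffCTransp n t c ∧ 0 < c ∧
      (tvdAffC n (t * w) : ℤ) = (tvdAffC n w : ℤ) - 2 * (c:ℤ) := by
  -- (a) some positive displacement exists
  have ha : ∃ j : ℤ, 0 < w j - j := by
    have hex : ∃ i ∈ Finset.Icc (1:ℤ) (n:ℤ), (w i - i).natAbs ≠ 0 := by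
      by_contra hcon
      push_neg at hcon
      exact hne (Finset.sum_eq_zero hcon)
    obtain ⟨i, hi, hne'⟩ := hex
    have : w i - i < 0 ∨ 0 < w i - i := by omega
    rcases this with h | h
    · refine ⟨-i, ?_⟩
      rw [hw.1]
      omega
    · exact ⟨i, h⟩
  -- (b) maximal displacement D, attained at p ∈ [0, 2n+1]
  have hne2 : ((Finset.Icc (0:ℤ) (2*(n:ℤ)+1)).image (fun j => w j - j)).Nonempty :=
    ⟨w 0 - 0, Finset.mem_image_of_mem _ (Finset.mem_Icc.mpr ⟨le_refl 0, by omega⟩)⟩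
  obtain ⟨p, hpmem, hpD⟩ := Finset.mem_image.mp
    (((Finset.Icc (0:ℤ) (2*(n:ℤ)+1)).image (fun j => w j - j)).max'_mem hne2)
  have hpD' : w p - p
      = ((Finset.Icc (0:ℤ) (2*(n:ℤ)+1)).image (fun j => w j - j)).max' hne2 := hpD
  obtain ⟨D, hD⟩ : ∃ D : ℤ, D = w p - p := ⟨_, rfl⟩
  have hub : ∀ j : ℤ, w j - j ≤ D := by
    intro j
    obtain ⟨r, k, hr0, hrN, hj⟩ := decomp (n := n) j
    have heq : w j - j = w r - r := by rw [hj, perm_shift hw k r]; ring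
    have hrmem : r ∈ Finset.Icc (0:ℤ) (2*(n:ℤ)+1) := Finset.mem_Icc.mpr ⟨hr0, by omega⟩
    have hmem' : (w r - r) ∈ (Finset.Icc (0:ℤ) (2*(n:ℤ)+1)).image (fun j => w j - j) :=
      Finset.mem_image_of_mem (fun j => w j - j) hrmem
    rw [heq, hD, hpD']
    exact Finset.le_max' _ _ hmem'
  have hlb : ∀ j : ℤ, -D ≤ w j - j := by
    intro j
    have h1 := hub (-j)
    rw [hw.1] at h1
    omega
  obtain ⟨j0, hj0⟩ := ha
  have hD1 : 1 ≤ D := by have := hub j0; omega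
  have hp0 : 0 ≤ p := (Finset.mem_Icc.mp hpmem).1
  obtain ⟨b, hb⟩ : ∃ b : ℤ, b = w p := ⟨_, rfl⟩
  have hbp : b = p + D := by omega
  have hb1 : 1 ≤ b := by omega
  -- (d) pigeonhole: a position q ≥ b with value < b
  have hq : ∃ q : ℤ, b ≤ q ∧ w q < b := by
    by_contra hcon
    push_neg at hcon
    have hmaps : ∀ z ∈ Finset.Ioo (-b) b, w⁻¹ z ∈ Finset.Ioo (-b) b := by
      intro z hz
      rw [Finset.mem_Ioo] at hz ⊢
      constructor
      · by_contra hle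
        push_neg at hle
        have h1 : b ≤ -(w⁻¹ z) := by omega
        have h2 := hcon _ h1
        have h3 : w (-(w⁻¹ z)) = -z := by rw [hw.1, Equiv.Perm.coe_inv, Equiv.apply_symm_apply]
        omega
      · by_contra hle
        push_neg at hle
        have h2 := hcon _ hle
        rw [Equiv.Perm.coe_inv, Equiv.apply_symm_apply] at h2
        omega
    have himage : (Finset.Ioo (-b) b).image (⇑w⁻¹) = Finset.Ioo (-b) b := by
      apply Finset.eq_of_subset_of_card_le
      · intro z hz
        obtain ⟨u, hu, rfl⟩ := Finset.mem_image.mp hz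
        exact hmaps u hu
      · rw [Finset.card_image_of_injective _ (Equiv.injective w⁻¹)]
    have hpmem' : p ∈ Finset.Ioo (-b) b := Finset.mem_Ioo.mpr ⟨by omega, by omega⟩
    rw [← himage] at hpmem'
    obtain ⟨z, hzmem, hz⟩ := Finset.mem_image.mp hpmem'
    have hzb : z = b := by
      have h4 := congrArg w hz
      rw [Equiv.Perm.coe_inv, Equiv.apply_symm_apply] at h4
      rw [h4, ← hb]
    rw [hzb] at hzmem
    exact absurd (Finset.mem_Ioo.mp hzmem).2 (lt_irrefl b)
  obtain ⟨q, hqb, haq⟩ := hq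
  obtain ⟨a, ha'⟩ : ∃ a : ℤ, a = w q := ⟨_, rfl⟩
  have hap : p ≤ a := by
    have h1 := hlb q
    omega
  have hab : a < b := by rw [ha']; exact haq
  have hpb : p < b := by omega
  -- divisibility facts
  have hba : ¬ (2*(n:ℤ)+2) ∣ b - a := by
    rintro ⟨m, hm⟩
    have hm1 : 1 ≤ m := by
      by_contra hm0
      push_neg at hm0
      have h1 : (2*(n:ℤ)+2) * m ≤ (2*(n:ℤ)+2) * 0 :=
        mul_le_mul_of_nonneg_left (by omega) (by positivity)
      rw [mul_zero] at h1
      omega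
    have hNm : (2*(n:ℤ)+2) * 1 ≤ (2*(n:ℤ)+2) * m :=
      mul_le_mul_of_nonneg_left hm1 (by positivity)
    rw [mul_one] at hNm
    have e1 : w (p + (-m) * (2*(n:ℤ)+2)) = b + (-m) * (2*(n:ℤ)+2) := by
      rw [perm_shift hw (-m) p, ← hb]
    have e2 : w q = b + (-m) * (2*(n:ℤ)+2) := by
      rw [← ha']
      linarith [mul_comm (2*(n:ℤ)+2) m]
    have hqq : q = p + (-m) * (2*(n:ℤ)+2) := w.injective (by rw [e1, e2])
    have : q ≤ p - (2*(n:ℤ)+2) := by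
      rw [hqq]
      linarith [mul_comm (2*(n:ℤ)+2) m]
    omega
  have h2a : ¬ (2*(n:ℤ)+2) ∣ 2*a := by
    rintro ⟨m, hm⟩
    have e1 : w (q + (-m) * (2*(n:ℤ)+2)) = a + (-m) * (2*(n:ℤ)+2) := by
      rw [perm_shift hw (-m) q, ← ha']
    have e2 : w (-q) = a + (-m) * (2*(n:ℤ)+2) := by
      rw [hw.1, ← ha']
      linarith [mul_comm (2*(n:ℤ)+2) m]
    have hqq : q + (-m) * (2*(n:ℤ)+2) = -q := w.injective (by rw [e1, e2])
    have h2q : 2*q = m * (2*(n:ℤ)+2) := by linarith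
    have : q = a := by linarith [mul_comm (2*(n:ℤ)+2) m]
    omega
  have h2b : ¬ (2*(n:ℤ)+2) ∣ 2*b := by
    rintro ⟨m, hm⟩
    have e1 : w (p + (-m) * (2*(n:ℤ)+2)) = b + (-m) * (2*(n:ℤ)+2) := by
      rw [perm_shift hw (-m) p, ← hb]
    have e2 : w (-p) = b + (-m) * (2*(n:ℤ)+2) := by
      rw [hw.1, ← hb]
      linarith [mul_comm (2*(n:ℤ)+2) m]
    have hqq : p + (-m) * (2*(n:ℤ)+2) = -p := w.injective (by rw [e1, e2])
    have : p = b := by linarith [mul_comm (2*(n:ℤ)+2) m]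
    omega
  have h2p : ¬ (2*(n:ℤ)+2) ∣ 2*p := by
    rintro ⟨m, hm⟩
    have e1 : w (p + (-m) * (2*(n:ℤ)+2)) = b + (-m) * (2*(n:ℤ)+2) := by
      rw [perm_shift hw (-m) p, ← hb]
    have e2 : p + (-m) * (2*(n:ℤ)+2) = -p := by linarith [mul_comm (2*(n:ℤ)+2) m]
    have e3 : w (-p) = -b := by rw [hw.1, ← hb]
    rw [e2, e3] at e1
    have : p = b := by linarith [mul_comm (2*(n:ℤ)+2) m]
    omega
  have h2q : ¬ (2*(n:ℤ)+2) ∣ 2*q := by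
    rintro ⟨m, hm⟩
    have e1 : w (q + (-m) * (2*(n:ℤ)+2)) = a + (-m) * (2*(n:ℤ)+2) := by
      rw [perm_shift hw (-m) q, ← ha']
    have e2 : q + (-m) * (2*(n:ℤ)+2) = -q := by linarith [mul_comm (2*(n:ℤ)+2) m]
    have e3 : w (-q) = -a := by rw [hw.1, ← ha']
    rw [e2, e3] at e1
    have : q = a := by linarith [mul_comm (2*(n:ℤ)+2) m]
    omega
  -- the transposition
  refine ⟨swapPerm (2*(n:ℤ)+2) a b hba h2a h2b,
    (if (2*(n:ℤ)+2) ∣ a + b then ((b-a)/2).toNat else (b-a).toNat),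
    swap_isTransp hab hba h2a h2b, ?_, ?_⟩
  · by_cases hk2 : (2*(n:ℤ)+2) ∣ a + b
    · have h2d : (2:ℤ) ∣ b - a := by
        obtain ⟨m, hm⟩ := hk2
        exact ⟨(n+1)*m - a, by linarith⟩
      rw [if_pos hk2]
      omega
    · rw [if_neg hk2]
      omega
  -- the tvd computation
  · obtain ⟨i1, hi1mem, hi1fam⟩ := window_rep h2q
    obtain ⟨i2, hi2mem, hi2fam⟩ := window_rep h2p
    -- values at i1, i2 and their t-images
    have hval1 : ∃ k : ℤ, (w i1 = a + k*(2*(n:ℤ)+2) ∧ i1 = q + k*(2*(n:ℤ)+2)) ∨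
        (w i1 = -a + k*(2*(n:ℤ)+2) ∧ i1 = -q + k*(2*(n:ℤ)+2)) := by
      obtain ⟨k, hk | hk⟩ := hi1fam
      · exact ⟨k, Or.inl ⟨by rw [hk, perm_shift hw k q, ← ha'], hk⟩⟩
      · exact ⟨k, Or.inr ⟨by rw [hk, perm_shift hw k (-q), hw.1, ← ha'], hk⟩⟩
    have hval2 : ∃ k : ℤ, (w i2 = b + k*(2*(n:ℤ)+2) ∧ i2 = p + k*(2*(n:ℤ)+2)) ∨
        (w i2 = -b + k*(2*(n:ℤ)+2) ∧ i2 = -p + k*(2*(n:ℤ)+2)) := by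
      obtain ⟨k, hk | hk⟩ := hi2fam
      · exact ⟨k, Or.inl ⟨by rw [hk, perm_shift hw k p, ← hb], hk⟩⟩
      · exact ⟨k, Or.inr ⟨by rw [hk, perm_shift hw k (-p), hw.1, ← hb], hk⟩⟩
    -- the two displaced terms
    have term1 : |swapPerm (2*(n:ℤ)+2) a b hba h2a h2b (w i1) - i1| - |w i1 - i1| = a - b := by
      obtain ⟨k, ⟨hv, hp'⟩ | ⟨hv, hp'⟩⟩ := hval1
      · have ht1 : swapPerm (2*(n:ℤ)+2) a b hba h2a h2b (w i1) = b + k*(2*(n:ℤ)+2) := by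
          rw [hv]; exact swapPerm_on_a k
        rw [ht1, hv, hp', show b + k*(2*(n:ℤ)+2) - (q + k*(2*(n:ℤ)+2)) = -(q - b) from by ring,
          show a + k*(2*(n:ℤ)+2) - (q + k*(2*(n:ℤ)+2)) = -(q - a) from by ring,
          abs_neg, abs_neg, abs_of_nonneg (by omega : (0:ℤ) ≤ q - b),
          abs_of_nonneg (by omega : (0:ℤ) ≤ q - a)]
        ring
      · have ht1 : swapPerm (2*(n:ℤ)+2) a b hba h2a h2b (w i1) = -b + k*(2*(n:ℤ)+2) := by
          rw [hv]; exact swapPerm_on_na k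
        rw [ht1, hv, hp', show -b + k*(2*(n:ℤ)+2) - (-q + k*(2*(n:ℤ)+2)) = q - b from by ring,
          show -a + k*(2*(n:ℤ)+2) - (-q + k*(2*(n:ℤ)+2)) = q - a from by ring,
          abs_of_nonneg (by omega : (0:ℤ) ≤ q - b), abs_of_nonneg (by omega : (0:ℤ) ≤ q - a)]
        ring
    have term2 : |swapPerm (2*(n:ℤ)+2) a b hba h2a h2b (w i2) - i2| - |w i2 - i2| = a - b := by
      obtain ⟨k, ⟨hv, hp'⟩ | ⟨hv, hp'⟩⟩ := hval2
      · have ht1 : swapPerm (2*(n:ℤ)+2) a b hba h2a h2b (w i2) = a + k*(2*(n:ℤ)+2) := by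
          rw [hv]; exact swapPerm_on_b k
        rw [ht1, hv, hp', show a + k*(2*(n:ℤ)+2) - (p + k*(2*(n:ℤ)+2)) = a - p from by ring,
          show b + k*(2*(n:ℤ)+2) - (p + k*(2*(n:ℤ)+2)) = b - p from by ring,
          abs_of_nonneg (by omega : (0:ℤ) ≤ a - p), abs_of_nonneg (by omega : (0:ℤ) ≤ b - p)]
        ring
      · have ht1 : swapPerm (2*(n:ℤ)+2) a b hba h2a h2b (w i2) = -a + k*(2*(n:ℤ)+2) := by
          rw [hv]; exact swapPerm_on_nb k
        rw [ht1, hv, hp', show -a + k*(2*(n:ℤ)+2) - (-p + k*(2*(n:ℤ)+2)) = -(a - p) from by ring,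
          show -b + k*(2*(n:ℤ)+2) - (-p + k*(2*(n:ℤ)+2)) = -(b - p) from by ring,
          abs_neg, abs_neg, abs_of_nonneg (by omega : (0:ℤ) ≤ a - p),
          abs_of_nonneg (by omega : (0:ℤ) ≤ b - p)]
        ring
    -- vanishing away from i1, i2
    have hvanish : ∀ i, i ∈ Finset.Icc (1:ℤ) (n:ℤ) → i ≠ i1 → i ≠ i2 →
        swapPerm (2*(n:ℤ)+2) a b hba h2a h2b (w i) = w i := by
      intro i hi hni1 hni2
      apply swapPerm_on_fix
      · intro hd
        obtain ⟨k, hk⟩ := dvd_exists hd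
        have : w i = w (q + k*(2*(n:ℤ)+2)) := by rw [perm_shift hw k q, ← ha', hk]
        have hik : i = q + k*(2*(n:ℤ)+2) := w.injective this
        exact hni1 (pos_window_eq hi hi1mem ⟨k, Or.inl hik⟩ hi1fam)
      · intro hd
        obtain ⟨k, hk⟩ := dvd_exists hd
        have : w i = w (p + k*(2*(n:ℤ)+2)) := by rw [perm_shift hw k p, ← hb, hk]
        have hik : i = p + k*(2*(n:ℤ)+2) := w.injective this
        exact hni2 (pos_window_eq hi hi2mem ⟨k, Or.inl hik⟩ hi2fam)
      · intro hd
        obtain ⟨k, hk⟩ := dvd_exists (show (2*(n:ℤ)+2) ∣ w i - (-a) by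
          rwa [show w i - (-a) = w i + a from by ring])
        have : w i = w (-q + k*(2*(n:ℤ)+2)) := by
          rw [perm_shift hw k (-q), hw.1, ← ha', hk]
        have hik : i = -q + k*(2*(n:ℤ)+2) := w.injective this
        exact hni1 (pos_window_eq hi hi1mem ⟨k, Or.inr hik⟩ hi1fam)
      · intro hd
        obtain ⟨k, hk⟩ := dvd_exists (show (2*(n:ℤ)+2) ∣ w i - (-b) by
          rwa [show w i - (-b) = w i + b from by ring])
        have : w i = w (-p + k*(2*(n:ℤ)+2)) := by
          rw [perm_shift hw k (-p), hw.1, ← hb, hk]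
        have hik : i = -p + k*(2*(n:ℤ)+2) := w.injective this
        exact hni2 (pos_window_eq hi hi2mem ⟨k, Or.inr hik⟩ hi2fam)
    have hsum : (tvdAffC n (swapPerm (2*(n:ℤ)+2) a b hba h2a h2b * w) : ℤ)
        - (tvdAffC n w : ℤ)
        = ∑ i ∈ Finset.Icc (1:ℤ) (n:ℤ),
            (|swapPerm (2*(n:ℤ)+2) a b hba h2a h2b (w i) - i| - |w i - i|) := by
      rw [tvd_cast, tvd_cast, ← Finset.sum_sub_distrib]
      exact Finset.sum_congr rfl (fun i _ => by rw [Equiv.Perm.mul_apply])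
    by_cases hksum : (2*(n:ℤ)+2) ∣ a + b
    · -- kind 2 : single moved window class
      obtain ⟨m, hm⟩ := id hksum
      have hqp : -p = q + (-m)*(2*(n:ℤ)+2) := by
        have e1 : w (q + (-m) * (2*(n:ℤ)+2)) = a + (-m) * (2*(n:ℤ)+2) := by
          rw [perm_shift hw (-m) q, ← ha']
        have e3 : w (-p) = -b := by rw [hw.1, ← hb]
        have e4 : a + (-m) * (2*(n:ℤ)+2) = -b := by linarith [mul_comm (2*(n:ℤ)+2) m]
        rw [e4] at e1
        exact (w.injective (by rw [e1, e3])).symm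
      have hi2fam' : ∃ k : ℤ, i2 = q + k*(2*(n:ℤ)+2) ∨ i2 = -q + k*(2*(n:ℤ)+2) := by
        obtain ⟨k, hk | hk⟩ := hi2fam
        · exact ⟨k + m, Or.inr (by rw [hk, show p = -q + m*(2*(n:ℤ)+2) from by linarith [hqp]]; ring)⟩
        · exact ⟨k - m, Or.inl (by rw [hk, show -p = q + (-m)*(2*(n:ℤ)+2) from hqp]; ring)⟩
      have h12 : i1 = i2 := pos_window_eq hi1mem hi2mem hi1fam hi2fam'
      have hsingle : ∑ i ∈ Finset.Icc (1:ℤ) (n:ℤ),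
          (|swapPerm (2*(n:ℤ)+2) a b hba h2a h2b (w i) - i| - |w i - i|)
          = ∑ i ∈ ({i1} : Finset ℤ),
            (|swapPerm (2*(n:ℤ)+2) a b hba h2a h2b (w i) - i| - |w i - i|) := by
        symm
        apply Finset.sum_subset
        · intro x hx
          rw [Finset.mem_singleton] at hx
          rw [hx]
          exact hi1mem
        · intro x hx hnx
          rw [Finset.mem_singleton] at hnx
          rw [hvanish x hx hnx (fun h => hnx (h.trans h12.symm))]
          ring
      have h2d : (2:ℤ) ∣ b - a := ⟨(n+1)*m - a, by linarith⟩
      rw [hsingle, Finset.sum_singleton, term1] at hsum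
      rw [if_pos hksum]
      have htn : (((b-a)/2).toNat : ℤ) = (b-a)/2 := Int.toNat_of_nonneg (by omega)
      rw [htn]
      omega
    · -- kind 1 : two moved window classes
      have h12 : i1 ≠ i2 := by
        intro h
        obtain ⟨k1, hk1 | hk1⟩ := hi1fam <;> obtain ⟨k2, hk2⟩ := hi2fam <;>
          rcases hk2 with hk2 | hk2
        · -- i1 = q + k1 N = p + k2 N
          have hqp : q = p + (k2 - k1)*(2*(n:ℤ)+2) := by
            have := hk1.symm.trans (h.trans hk2)
            linarith [this]
          have : a = b + (k2 - k1)*(2*(n:ℤ)+2) := by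
            rw [ha', hqp, perm_shift hw (k2 - k1) p, ← hb]
          have hmc := mul_comm (k2 - k1) (2*(n:ℤ)+2)
          exact hba ⟨-(k2 - k1), by linarith [hmc, mul_comm (2*(n:ℤ)+2) (-(k2 - k1))]⟩
        · -- i1 = q + k1 N = -p + k2 N
          have hqp : q = -p + (k2 - k1)*(2*(n:ℤ)+2) := by
            have := hk1.symm.trans (h.trans hk2)
            linarith [this]
          have : a = -b + (k2 - k1)*(2*(n:ℤ)+2) := by
            rw [ha', hqp, perm_shift hw (k2 - k1) (-p), hw.1, ← hb]
          have hmc := mul_comm (k2 - k1) (2*(n:ℤ)+2)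
          exact hksum ⟨(k2 - k1), by linarith [hmc, mul_comm (2*(n:ℤ)+2) (k2 - k1)]⟩
        · -- i1 = -q + k1 N = p + k2 N
          have hqp : q = -p + (k1 - k2)*(2*(n:ℤ)+2) := by
            have := hk1.symm.trans (h.trans hk2)
            linarith [this]
          have : a = -b + (k1 - k2)*(2*(n:ℤ)+2) := by
            rw [ha', hqp, perm_shift hw (k1 - k2) (-p), hw.1, ← hb]
          have hmc := mul_comm (k1 - k2) (2*(n:ℤ)+2)
          exact hksum ⟨(k1 - k2), by linarith [hmc, mul_comm (2*(n:ℤ)+2) (k1 - k2)]⟩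
        · -- i1 = -q + k1 N = -p + k2 N
          have hqp : q = p + (k1 - k2)*(2*(n:ℤ)+2) := by
            have := hk1.symm.trans (h.trans hk2)
            linarith [this]
          have : a = b + (k1 - k2)*(2*(n:ℤ)+2) := by
            rw [ha', hqp, perm_shift hw (k1 - k2) p, ← hb]
          have hmc := mul_comm (k1 - k2) (2*(n:ℤ)+2)
          exact hba ⟨-(k1 - k2), by linarith [hmc, mul_comm (2*(n:ℤ)+2) (-(k1 - k2))]⟩
      have hpair : ∑ i ∈ Finset.Icc (1:ℤ) (n:ℤ),
          (|swapPerm (2*(n:ℤ)+2) a b hba h2a h2b (w i) - i| - |w i - i|)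
          = ∑ i ∈ ({i1, i2} : Finset ℤ),
            (|swapPerm (2*(n:ℤ)+2) a b hba h2a h2b (w i) - i| - |w i - i|) := by
        symm
        apply Finset.sum_subset
        · intro x hx
          rw [Finset.mem_insert, Finset.mem_singleton] at hx
          rcases hx with hx | hx <;> rw [hx]
          · exact hi1mem
          · exact hi2mem
        · intro x hx hnx
          rw [Finset.mem_insert, Finset.mem_singleton] at hnx
          push_neg at hnx
          rw [hvanish x hx hnx.1 hnx.2]
          ring
      rw [hpair, Finset.sum_pair h12, term1, term2] at hsum
      rw [if_neg hksum]
      have htn : ((b-a).toNat : ℤ) = b - a := Int.toNat_of_nonneg (by omega)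
      rw [htn]
      omega

lemma exists_factorization : ∀ (m : ℕ) (w : Equiv.Perm ℤ), IsAffCPerm n w → tvdAffC n w = m →
    ∃ L : List (Equiv.Perm ℤ × ℕ), (∀ p ∈ L, IsAffCTransp n p.1 p.2) ∧
      (L.map Prod.fst).prod = w ∧ 2 * (L.map Prod.snd).sum = m := by
  intro m
  induction m using Nat.strong_induction_on with
  | _ m ih =>
    intro w hw hm
    by_cases h0 : m = 0
    · subst h0
      have hw1 : w = 1 := eq_one_of_tvd_zero hw hm
      exact ⟨[], by simp, by simp [hw1], by simp⟩
    · obtain ⟨t, c, htc, hcpos, hdrop⟩ := exists_step hw (by omega)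
      have hw' : IsAffCPerm n (t * w) := perm_mul (transp_perm htc) hw
      have hlt : tvdAffC n (t * w) < m := by
        rw [hm] at hdrop
        omega
      obtain ⟨L', hL', hprod', hsum'⟩ := ih _ hlt (t * w) hw' rfl
      refine ⟨(t⁻¹, c) :: L', ?_, ?_, ?_⟩
      · intro pr hpr
        rcases List.mem_cons.mp hpr with h | h
        · rw [h]
          exact transp_inv htc
        · exact hL' pr h
      · simp only [List.map_cons, List.prod_cons, hprod']
        rw [← mul_assoc, inv_mul_cancel, one_mul]
      · simp only [List.map_cons, List.sum_cons]
        rw [hm] at hdrop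
        omega

end AffC


/-- For every affine signed permutation `w ∈ S̃^C_n`, the cost of `w` equals half of
its total displacement: `$(w) = tvd(w)/2`. -/
theorem cost_eq_half_tvd_affineC (n : ℕ) (w : Equiv.Perm ℤ) (hw : IsAffCPerm n w) :
    2 * costAffC n w = tvdAffC n w := by
  classical
  obtain ⟨L, hL, hprod, hsum⟩ := AffC.exists_factorization (tvdAffC n w) w hw rfl
  have hmem : (L.map Prod.snd).sum ∈ {c : ℕ | ∃ L : List (Equiv.Perm ℤ × ℕ),
      (∀ p ∈ L, IsAffCTransp n p.1 p.2) ∧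
      (L.map Prod.fst).prod = w ∧ c = (L.map Prod.snd).sum} := ⟨L, hL, hprod, rfl⟩
  have hub : costAffC n w ≤ (L.map Prod.snd).sum := Nat.sInf_le hmem
  have hinf : costAffC n w ∈ {c : ℕ | ∃ L : List (Equiv.Perm ℤ × ℕ),
      (∀ p ∈ L, IsAffCTransp n p.1 p.2) ∧
      (L.map Prod.fst).prod = w ∧ c = (L.map Prod.snd).sum} := Nat.sInf_mem ⟨_, hmem⟩
  obtain ⟨L', hL', hprod', hsum'⟩ := hinf
  have hlow := AffC.tvd_list (n := n) L' hL'
  rw [hprod'] at hlow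
  have h1 : (tvdAffC n w : ℤ) ≤ 2 * ((L'.map Prod.snd).sum : ℤ) := hlow.2
  rw [← hsum'] at h1
  omega
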